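/- Let A and B be virtually cyclic groups and n a natural number. Then there are only finitely many injective homomorphisms i : A → B with [B : i(A)] ≤ n, up to precomposition by inner automorphisms of A. -/

import Mathlib

/-- A group is virtually cyclic if it has a cyclic subgroup of finite index. -/
def IsVirtuallyCyclic (G : Type*) [Group G] : Prop :=
  ∃ H : Subgroup G, IsCyclic H ∧ H.FiniteIndex

open Subgroup

lemma aux_fg {G : Type*} [Group G] (h : IsVirtuallyCyclic G) : Group.FG G := by
  obtain ⟨H, hcyc, hfi⟩ := h
  obtain ⟨g, hg⟩ := hcyc.exists_generator
  haveI := hfi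
  haveI : Finite (G ⧸ H) := Subgroup.finite_quotient_of_finiteIndex (H := H)
  rw [Group.fg_iff]
  refine ⟨{(g : G)} ∪ Set.range (Quotient.out : G ⧸ H → G),  ?_, ?_⟩
  · rw [eq_top_iff]
    intro x _
    have h1 : (⟦x⟧ : G ⧸ H).out⁻¹ * x ∈ H := by
      rw [← QuotientGroup.eq]
      exact QuotientGroup.out_eq' _
    have h2 : (⟦x⟧ : G ⧸ H).out⁻¹ * x ∈ Subgroup.closure ({(g : G)} ∪ Set.range (Quotient.out : G ⧸ H → G)) := by
      obtain ⟨k, hk⟩ := Subgroup.mem_zpowers_iff.mp (hg ⟨_, h1⟩)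
      have : (g : G) ^ k = (⟦x⟧ : G ⧸ H).out⁻¹ * x := by
        have := congrArg (Subtype.val) hk
        simpa using this
      rw [← this]
      have hgmem : (g : G) ∈ Subgroup.closure ({(g : G)} ∪ Set.range (Quotient.out : G ⧸ H → G)) :=
        Subgroup.subset_closure (by simp)
      exact Subgroup.zpow_mem _ hgmem k
    have h3 : (⟦x⟧ : G ⧸ H).out ∈ Subgroup.closure ({(g : G)} ∪ Set.range (Quotient.out : G ⧸ H → G)) :=
      Subgroup.subset_closure (Or.inr ⟨⟦x⟧, rfl⟩)
    simpa using mul_mem h3 h2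
  · exact (Set.finite_singleton _).union (Set.finite_range _)

lemma aux_hom_finite {G H : Type*} [Group G] [Group H] (hG : Group.FG G) [Finite H] :
    Finite (G →* H) := by
  obtain ⟨S, hScl, hS⟩ := Group.fg_iff.mp hG
  haveI := hS.fintype
  refine Finite.of_injective (fun φ : G →* H => (fun s : S => φ s)) ?_
  intro φ ψ h
  have : Set.EqOn φ ψ S := fun x hx => congrFun h ⟨x, hx⟩
  exact MonoidHom.eq_of_eqOn_dense hScl this

lemma aux_MH {G : Type*} [Group G] (hG : Group.FG G) (d : ℕ) (hd : d ≠ 0) :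
    {K : Subgroup G | K.index = d}.Finite := by
  classical
  haveI : NeZero d := ⟨hd⟩
  haveI : Finite (G →* Equiv.Perm (Fin d)) := aux_hom_finite hG
  have key : ∀ K ∈ {K : Subgroup G | K.index = d}, ∃ ρ : G →* Equiv.Perm (Fin d),
      ∀ b : G, b ∈ K ↔ ρ b 0 = 0 := by
    intro K hK
    rw [Set.mem_setOf_eq] at hK
    haveI : K.FiniteIndex := ⟨by rw [hK]; exact hd⟩
    haveI : Finite (G ⧸ K) := Subgroup.finite_quotient_of_finiteIndex (H := K)
    haveI : Fintype (G ⧸ K) := Fintype.ofFinite _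
    have hcard : Fintype.card (G ⧸ K) = d := by
      rw [← Nat.card_eq_fintype_card]; exact hK
    have e0 : G ⧸ K ≃ Fin d := Fintype.equivFinOfCardEq hcard
    obtain ⟨e, he1⟩ : ∃ e : G ⧸ K ≃ Fin d, e (QuotientGroup.mk 1) = 0 :=
      ⟨e0.trans (Equiv.swap (e0 (QuotientGroup.mk 1)) 0), by
        simp [Equiv.swap_apply_left]⟩
    refine ⟨{ toFun := fun b => (e.symm.trans (MulAction.toPerm b)).trans e,
              map_one' := by ext z; simp
              map_mul' := by intro a b; ext z; simp [mul_smul] }, ?_⟩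
    intro b
    have hsmul : b • (QuotientGroup.mk 1 : G ⧸ K) = QuotientGroup.mk b := by
      rw [MulAction.Quotient.smul_mk]; simp
    have happ : (((e.symm.trans (MulAction.toPerm b)).trans e) 0 : Fin d)
        = e (QuotientGroup.mk b) := by
      have hsym : e.symm 0 = QuotientGroup.mk 1 := by
        rw [← he1, Equiv.symm_apply_apply]
      rw [Equiv.trans_apply, Equiv.trans_apply, hsym]
      show e (b • (QuotientGroup.mk 1 : G ⧸ K)) = _
      rw [hsmul]
    simp only [MonoidHom.coe_mk, OneHom.coe_mk, happ]
    rw [← he1]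
    constructor
    · intro hb
      congr 1
      exact (QuotientGroup.eq).mpr (by simpa using hb)
    · intro hb
      have := (QuotientGroup.eq).mp (e.injective hb).symm
      simpa using this
  choose ρ hρ using key
  have hinj : Set.InjOn
      (fun K : Subgroup G => if h : K ∈ {K : Subgroup G | K.index = d} then ρ K h else 1)
      {K : Subgroup G | K.index = d} := by
    intro K hK K' hK' h
    simp only [dif_pos hK, dif_pos hK'] at h
    ext b
    rw [hρ K hK b, hρ K' hK' b, h]
  exact Set.Finite.of_finite_image (Set.toFinite _) hinj

lemma aux_MH' {G : Type*} [Group G] (hG : Group.FG G) (n : ℕ) :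
    {K : Subgroup G | K.index ≤ n ∧ K.index ≠ 0}.Finite := by
  have : {K : Subgroup G | K.index ≤ n ∧ K.index ≠ 0} ⊆
      ⋃ d ∈ Finset.Icc 1 n, {K : Subgroup G | K.index = d} := by
    intro K ⟨h1, h2⟩
    simp only [Set.mem_iUnion]
    exact ⟨K.index, by simp [Finset.mem_Icc, Nat.one_le_iff_ne_zero, h1, h2], rfl⟩
  refine Set.Finite.subset ?_ this
  refine Set.Finite.biUnion (Finset.Icc 1 n).finite_toSet ?_
  intro d hd
  exact aux_MH hG d (by simp [Finset.mem_Icc] at hd; omega)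

/-- Core rigidity: finitely many automorphisms up to inner, given a characteristic
infinite cyclic finite-index subgroup. -/
lemma aux_out_of_u {A : Type*} [Group A] (u : A)
    (hinj : Function.Injective fun k : ℤ => u ^ k)
    (hfi : (Subgroup.zpowers u).FiniteIndex)
    (hchar : ∀ (e : MulAut A) (x : A), x ∈ Subgroup.zpowers u → e x ∈ Subgroup.zpowers u) :
    ∃ F : Set (MulAut A), F.Finite ∧ ∀ α : MulAut A, ∃ β ∈ F, ∃ a : A,
      (MulAut.conj a).trans α = β := by
  classical
  set C := Subgroup.zpowers u with hC
  haveI : C.Normal := by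
    refine ⟨fun c hc a => ?_⟩
    have := hchar (MulAut.conj a) c hc
    rwa [MulAut.conj_apply] at this
  haveI : C.FiniteIndex := hfi
  haveI : Finite (A ⧸ C) := Subgroup.finite_quotient_of_finiteIndex (H := C)
  -- basic exponent facts
  have hu1 : ∀ k : ℤ, u ^ k = 1 → k = 0 := by
    intro k h
    exact hinj (show u ^ k = u ^ (0:ℤ) by simpa using h)
  -- automorphisms send u to u or u⁻¹
  have heu : ∀ e : MulAut A, e u = u ∨ e u = u⁻¹ := by
    intro e
    obtain ⟨p, hp⟩ := Subgroup.mem_zpowers_iff.mp (hchar e u (Subgroup.mem_zpowers u))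
    obtain ⟨q, hq⟩ := Subgroup.mem_zpowers_iff.mp (hchar e.symm u (Subgroup.mem_zpowers u))
    have h1 : u = u ^ (p * q) := by
      conv_lhs => rw [← e.apply_symm_apply u, ← hq, map_zpow, ← hp, ← zpow_mul]
    have h2 : p * q = 1 := by
      have := hinj (show u ^ (p*q) = u ^ (1:ℤ) by simpa using h1.symm)
      simpa using this
    rcases Int.eq_one_or_neg_one_of_mul_eq_one h2 with h | h
    · left; rw [← hp, h, zpow_one]
    · right; rw [← hp, h]; simp
  -- non-commuting elements invert u
  have hcd : ∀ x : A, ¬ Commute x u → x⁻¹ * u * x = u⁻¹ := by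
    intro x hx
    rcases heu (MulAut.conj x⁻¹) with h | h
    · exfalso
      rw [MulAut.conj_apply, inv_inv] at h
      apply hx
      have h2 : u * x = x * u := by
        calc u * x = x * (x⁻¹ * u * x) := by group
        _ = x * u := by rw [h]
      exact h2.symm
    · rwa [MulAut.conj_apply, inv_inv] at h
  -- automorphisms fixing u fix C pointwise
  have hfixC : ∀ γ : MulAut A, γ u = u → ∀ c ∈ C, γ c = c := by
    rintro γ hγu c hc
    obtain ⟨k, rfl⟩ := Subgroup.mem_zpowers_iff.mp hc
    rw [map_zpow, hγu]
  -- rigidity on u-centralizing elements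
  have R2 : ∀ γ : MulAut A, γ u = u → (∀ x, x⁻¹ * γ x ∈ C) → ∀ x, Commute x u → γ x = x := by
    intro γ hγu hγC x hx
    obtain ⟨k, hk⟩ := Subgroup.mem_zpowers_iff.mp (hγC x)
    set m := orderOf ((QuotientGroup.mk x) : A ⧸ C) with hm
    have hmne : m ≠ 0 := (orderOf_pos _).ne'
    have hxm : x ^ m ∈ C := by
      rw [← QuotientGroup.eq_one_iff]
      have : ((QuotientGroup.mk' C) x) ^ m = 1 := pow_orderOf_eq_one _
      rw [← map_pow] at this
      exact this
    have hγx : γ x = x * u ^ k := by rw [hk]; group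
    have hcx : Commute x (u ^ k) := hx.zpow_right k
    have h1 : γ (x ^ m) = x ^ m := hfixC γ hγu _ hxm
    have h2 : x ^ m = x ^ m * (u ^ k) ^ m := by
      conv_lhs => rw [← h1, map_pow, hγx, hcx.mul_pow]
    have h3 : (u ^ k) ^ m = 1 :=
      mul_left_cancel (a := x ^ m) (by rw [mul_one]; exact h2.symm)
    have h4 : u ^ (k * (m:ℤ)) = 1 := by
      rw [zpow_mul, zpow_natCast]; exact h3
    have h5 : k = 0 := by
      have := hu1 _ h4
      rcases mul_eq_zero.mp this with h | h
      · exact h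
      · exact absurd (by exact_mod_cast h) hmne
    rw [h5, zpow_zero] at hk
    calc γ x = x * (x⁻¹ * γ x) := by group
    _ = x := by rw [← hk, mul_one]
  -- rigidity on non-commuting elements : the "cocycle value" is constant
  have R3 : ∀ γ : MulAut A, γ u = u → (∀ x, x⁻¹ * γ x ∈ C) →
      ∀ t t' : A, ¬ Commute t u → ¬ Commute t' u → t⁻¹ * γ t = t'⁻¹ * γ t' := by
    intro γ hγu hγC t t' ht ht'
    set s := t'⁻¹ * t with hs
    have ht'c : t' * u * t'⁻¹ = u⁻¹ := by
      have h := hcd t' ht'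
      have : t' * (t'⁻¹ * u * t') * t'⁻¹ = t' * u⁻¹ * t'⁻¹ := by rw [h]
      have h2 : u = t' * u⁻¹ * t'⁻¹ := by rw [← this]; group
      calc t' * u * t'⁻¹ = (t' * u⁻¹ * t'⁻¹)⁻¹ := by group
      _ = u⁻¹ := by rw [← h2]
    have hsu : Commute s u := by
      have : s⁻¹ * u * s = u := by
        calc s⁻¹ * u * s = t⁻¹ * (t' * u * t'⁻¹) * t := by rw [hs]; group
        _ = t⁻¹ * u⁻¹ * t := by rw [ht'c]
        _ = (t⁻¹ * u * t)⁻¹ := by group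
        _ = u := by rw [show t⁻¹ * u * t = u⁻¹ from hcd t ht]; group
      have h : u * s = s * u := by
        calc u * s = s * (s⁻¹ * u * s) := by group
        _ = s * u := by rw [this]
      exact h.symm
    have hγs : γ s = s := R2 γ hγu hγC s hsu
    obtain ⟨k', hk'⟩ := Subgroup.mem_zpowers_iff.mp (hγC t')
    have hsc' : Commute s (u ^ k') := hsu.zpow_right k'
    have hγt : γ t = t * (t⁻¹ * γ t) := by group
    have hγt' : γ t' = t' * (u ^ k') := by rw [hk']; group
    have key : s = s * ((u ^ k')⁻¹ * (t⁻¹ * γ t)) := by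
      conv_lhs => rw [← hγs]
      have : γ s = (u ^ k')⁻¹ * s * (t⁻¹ * γ t) := by
        rw [hs, map_mul, map_inv, hγt', hγt]; group
      rw [this]
      have hcomm : (u ^ k')⁻¹ * s = s * (u ^ k')⁻¹ := (hsc'.inv_right.symm).eq
      rw [hcomm]; group
    have : (u ^ k')⁻¹ * (t⁻¹ * γ t) = 1 :=
      mul_left_cancel (a := s) (by rw [mul_one]; exact key.symm)
    have h2 : t⁻¹ * γ t = u ^ k' := by
      rw [← inv_mul_cancel (u ^ k')] at this
      exact mul_left_cancel this
    rw [h2, hk']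
  -- the induced map on the finite quotient
  have hle : ∀ α : MulAut A, C ≤ C.comap (α : A →* A) := by
    intro α x hx
    exact Subgroup.mem_comap.mpr (hchar α x hx)
  set barj : MulAut A → ((A ⧸ C) →* (A ⧸ C)) :=
    fun α => QuotientGroup.map C C (α : A →* A) (hle α) with hbarj
  have hbar : ∀ (α : MulAut A) (x : A),
      barj α (QuotientGroup.mk x) = QuotientGroup.mk (α x) := by
    intro α x
    simp [hbarj, QuotientGroup.map_mk]
  have hbarinj : ∀ α : MulAut A, Function.Injective (barj α) := by
    intro α
    have hli : Function.LeftInverse (barj α.symm) (barj α) := by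
      intro q
      induction q using QuotientGroup.induction_on with
      | H x => rw [hbar, hbar]; simp
    exact hli.injective
  haveI hQfin : Finite ((A ⧸ C) →* (A ⧸ C)) :=
    Finite.of_injective _ (DFunLike.coe_injective (F := (A ⧸ C) →* (A ⧸ C)))
  -- the finite invariant
  set Ψ : MulAut A → A × ((A ⧸ C) →* (A ⧸ C)) := fun α => (α u, barj α) with hΨ
  have hRfin : (Set.range Ψ).Finite := by
    refine Set.Finite.subset (Set.Finite.prod
      ((Set.finite_singleton u).insert u⁻¹) Set.finite_univ) ?_
    rintro p ⟨α, rfl⟩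
    refine Set.mem_prod.mpr ⟨?_, Set.mem_univ _⟩
    rcases heu α with h | h <;> simp [hΨ, h]
  -- a section of Ψ
  set sfun : A × ((A ⧸ C) →* (A ⧸ C)) → MulAut A :=
    fun r => if h : ∃ α : MulAut A, Ψ α = r then h.choose else MulEquiv.refl A with hsfun
  have hs : ∀ α : MulAut A, Ψ (sfun (Ψ α)) = Ψ α := by
    intro α
    have h : ∃ β : MulAut A, Ψ β = Ψ α := ⟨α, rfl⟩
    simp only [hsfun, dif_pos h]
    exact h.choose_spec
  -- properties of the correction term γ = β⁻¹ ∘ α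
  have hgam : ∀ α : MulAut A, ∀ γ : MulAut A, γ = α.trans (sfun (Ψ α)).symm →
      (γ u = u ∧ ∀ x, x⁻¹ * γ x ∈ C) ∧ γ.trans (sfun (Ψ α)) = α := by
    intro α γ hγ
    set β := sfun (Ψ α) with hβ
    have hΨβ : Ψ β = Ψ α := hs α
    have hβu : β u = α u := congrArg Prod.fst hΨβ
    have hβbar : barj β = barj α := congrArg Prod.snd hΨβ
    have htrans : γ.trans β = α := by
      ext x
      simp [hγ, MulEquiv.trans_apply]
    refine ⟨⟨?_, ?_⟩, htrans⟩
    · rw [hγ]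
      simp only [MulEquiv.trans_apply]
      rw [← hβu, MulEquiv.symm_apply_apply]
    · intro x
      have h1 : barj β (QuotientGroup.mk (γ x)) = barj β (QuotientGroup.mk x) := by
        have hβγ : β (γ x) = α x := by rw [← htrans]; rfl
        rw [hbar, hβγ, ← hbar α x, ← hβbar]
      have h2 := hbarinj β h1
      exact QuotientGroup.eq.mp h2.symm
  -- packaging
  have main : ∀ G01 : Set (MulAut A), G01.Finite →
      (∀ α : MulAut A, ∃ γ ∈ G01, ∃ a : A, (MulAut.conj a).trans α = γ.trans (sfun (Ψ α))) →
      ∃ F : Set (MulAut A), F.Finite ∧ ∀ α : MulAut A, ∃ β ∈ F, ∃ a : A,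
        (MulAut.conj a).trans α = β := by
    intro G01 hfin hcov
    refine ⟨⋃ r ∈ Set.range Ψ, (fun γ : MulAut A => γ.trans (sfun r)) '' G01,
      hRfin.biUnion (fun r _ => hfin.image _), ?_⟩
    intro α
    obtain ⟨γ, hγmem, a, ha⟩ := hcov α
    exact ⟨γ.trans (sfun (Ψ α)), Set.mem_biUnion (Set.mem_range_self α) ⟨γ, hγmem, rfl⟩, a, ha⟩
  by_cases hcom : ∀ x : A, Commute x u
  · -- centralizing case : the correction is trivial
    refine main {γ : MulAut A | γ u = u ∧ ∀ x, x⁻¹ * γ x ∈ C} ?_ ?_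
    · refine Set.Finite.subset (Set.finite_singleton (MulEquiv.refl A)) ?_
      rintro γ ⟨h1, h2⟩
      refine Set.mem_singleton_iff.mpr (MulEquiv.ext fun x => ?_)
      exact R2 γ h1 h2 x (hcom x)
    · intro α
      obtain ⟨⟨P1, P2⟩, htrans⟩ := hgam α (α.trans (sfun (Ψ α)).symm) rfl
      refine ⟨_, ⟨P1, P2⟩, 1, ?_⟩
      rw [htrans]
      ext x
      simp [MulEquiv.trans_apply, MulAut.conj_apply]
  · -- the non-centralizing case
    obtain ⟨t₀, ht₀⟩ := not_forall.mp hcom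
    refine main {γ : MulAut A | (γ u = u ∧ ∀ x, x⁻¹ * γ x ∈ C) ∧
        (γ t₀ = t₀ ∨ γ t₀ = t₀ * u)} ?_ ?_
    · refine Set.Finite.of_finite_image (f := fun γ : MulAut A => γ t₀) ?_ ?_
      · refine Set.Finite.subset ((Set.finite_singleton (t₀ * u)).insert t₀) ?_
        rintro y ⟨γ, ⟨_, h2⟩, rfl⟩
        rcases h2 with h | h <;> simp [h]
      · rintro γ ⟨⟨hγ1, hγ2⟩, _⟩ γ' ⟨⟨hγ'1, hγ'2⟩, _⟩ hval
        refine MulEquiv.ext fun x => ?_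
        by_cases hx : Commute x u
        · rw [R2 γ hγ1 hγ2 x hx, R2 γ' hγ'1 hγ'2 x hx]
        · have e1 : x⁻¹ * γ x = t₀⁻¹ * γ t₀ := R3 γ hγ1 hγ2 x t₀ hx ht₀
          have e2 : x⁻¹ * γ' x = t₀⁻¹ * γ' t₀ := R3 γ' hγ'1 hγ'2 x t₀ hx ht₀
          calc γ x = x * (x⁻¹ * γ x) := by group
          _ = x * (x⁻¹ * γ' x) := by rw [e1, e2, show γ t₀ = γ' t₀ from hval]
          _ = γ' x := by group
    · intro α
      obtain ⟨⟨P1, P2⟩, htrans⟩ := hgam α (α.trans (sfun (Ψ α)).symm) rfl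
      set β := sfun (Ψ α) with hβ
      set γ := α.trans β.symm with hγdef
      obtain ⟨k, hk⟩ := Subgroup.mem_zpowers_iff.mp (P2 t₀)
      set j : ℤ := k / 2 with hj
      set γ' : MulAut A := (MulAut.conj (u ^ j)).trans γ with hγ'def
      have hfixj : γ (u ^ j) = u ^ j := hfixC γ P1 _ (Subgroup.mem_zpowers_iff.mpr ⟨j, rfl⟩)
      have hγ'app : ∀ x, γ' x = u ^ j * γ x * (u ^ j)⁻¹ := by
        intro x
        show γ (u ^ j * x * (u ^ j)⁻¹) = _
        rw [map_mul, map_mul, hfixj, map_inv, hfixj]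
      have hγ'u : γ' u = u := by
        rw [hγ'app, P1]
        have hcj : u ^ j * u = u * u ^ j := ((Commute.refl u).zpow_left j).eq
        rw [hcj, mul_assoc, mul_inv_cancel, mul_one]
      have hγ'C : ∀ x, x⁻¹ * γ' x ∈ C := by
        intro x
        have heq : x⁻¹ * γ' x = (x⁻¹ * u ^ j * x) * ((x⁻¹ * γ x) * (u ^ j)⁻¹) := by
          rw [hγ'app]; group
        rw [heq]
        have hn1 : x⁻¹ * u ^ j * x ∈ C := by
          have := hchar (MulAut.conj x⁻¹) (u ^ j) (Subgroup.mem_zpowers_iff.mpr ⟨j, rfl⟩)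
          rwa [MulAut.conj_apply, inv_inv] at this
        exact mul_mem hn1 (mul_mem (P2 x) (inv_mem (Subgroup.mem_zpowers_iff.mpr ⟨j, rfl⟩)))
      have hγt₀ : γ t₀ = t₀ * u ^ k := by rw [hk]; group
      have hconj : t₀⁻¹ * u ^ j * t₀ = u ^ (-j) := by
        have h0 : t₀⁻¹ * u * t₀ = u⁻¹ := hcd t₀ ht₀
        have h1 : (t₀⁻¹ * u * t₀⁻¹⁻¹) ^ j = t₀⁻¹ * u ^ j * t₀⁻¹⁻¹ := conj_zpow
        rw [inv_inv] at h1
        rw [← h1, h0]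
        rw [inv_zpow, ← zpow_neg]
      have hparam : γ' t₀ = t₀ * u ^ (k - 2 * j) := by
        have e1 : γ' t₀ = t₀ * ((t₀⁻¹ * u ^ j * t₀) * (u ^ k * (u ^ j)⁻¹)) := by
          rw [hγ'app, hγt₀]; group
        rw [e1, hconj, ← zpow_neg, ← zpow_add, ← zpow_add]
        congr 1
        try ring
      have hk2 : k - 2 * j = k % 2 := by rw [hj, Int.emod_def]
      have hmem : γ' t₀ = t₀ ∨ γ' t₀ = t₀ * u := by
        rw [hparam, hk2]
        rcases Int.emod_two_eq_zero_or_one k with h | h <;> rw [h]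
        · left; rw [zpow_zero, mul_one]
        · right; rw [zpow_one]
      refine ⟨γ', ⟨⟨hγ'u, hγ'C⟩, hmem⟩, u ^ j, ?_⟩
      refine MulEquiv.ext fun x => ?_
      have hx1 : ((MulAut.conj (u ^ j)).trans α) x = α ((MulAut.conj (u ^ j)) x) := rfl
      have hx2 : (γ'.trans β) x = β (γ ((MulAut.conj (u ^ j)) x)) := rfl
      rw [hx1, hx2]
      have := congrArg (fun δ : MulAut A => δ ((MulAut.conj (u ^ j)) x)) htrans
      simpa [MulEquiv.trans_apply] using this.symm

lemma aux_out {A : Type*} [Group A] (hA : ∃ H : Subgroup A, IsCyclic H ∧ H.FiniteIndex) :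
    ∃ F : Set (MulAut A), F.Finite ∧ ∀ α : MulAut A, ∃ β ∈ F, ∃ a : A,
      (MulAut.conj a).trans α = β := by
  classical
  by_cases hfin : Finite A
  · haveI : Finite (MulAut A) :=
      Finite.of_injective (fun e : MulAut A => (e : A → A)) (fun e f h => by
        ext x; exact congrFun h x)
    refine ⟨Set.univ, Set.finite_univ, fun α => ⟨α, Set.mem_univ _, 1, ?_⟩⟩
    ext x
    simp [MulAut.conj_apply]
  · haveI : Infinite A := not_finite_iff_infinite.mp hfin
    obtain ⟨H, hcyc, hfi⟩ := hA
    haveI := hcyc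
    haveI := hfi
    set d := H.index with hd
    have hdne : d ≠ 0 := hfi.index_ne_zero
    set S := {K : Subgroup A | K.index = d} with hS
    have hSfin : S.Finite := aux_MH (aux_fg ⟨H, hcyc, hfi⟩) d hdne
    have hHS : H ∈ S := rfl
    set C := sInf S with hC
    have hCle : C ≤ H := sInf_le hHS
    haveI hSsub : Finite ↥S := hSfin.to_subtype
    have hCfi : C.FiniteIndex := by
      rw [hC, sInf_eq_iInf']
      exact Subgroup.finiteIndex_iInf fun K => ⟨by
        have : (K : Subgroup A).index = d := K.2
        rw [this]; exact hdne⟩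
    have hchar : ∀ (e : MulAut A) (x : A), x ∈ C → e x ∈ C := by
      intro e x hx
      rw [hC, Subgroup.mem_sInf]
      intro K hK
      have hKc : K.comap (e : A →* A) ∈ S := by
        have : (K.comap (e : A →* A)).index = K.index :=
          K.index_comap_of_surjective e.surjective
        rw [hS, Set.mem_setOf_eq, this]
        exact hK
      have := (Subgroup.mem_sInf.mp (hC ▸ hx)) _ hKc
      exact Subgroup.mem_comap.mp this
    haveI : IsCyclic ↥C := Subgroup.isCyclic_of_le hCle
    obtain ⟨g, hg⟩ := (inferInstance : IsCyclic ↥C).exists_generator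
    set u := (g : A) with hu
    have hCz : C = Subgroup.zpowers u := by
      apply le_antisymm
      · intro x hx
        obtain ⟨k, hk⟩ := Subgroup.mem_zpowers_iff.mp (hg ⟨x, hx⟩)
        exact Subgroup.mem_zpowers_iff.mpr ⟨k, by
          have := congrArg (Subtype.val) hk
          simpa using this⟩
      · rw [Subgroup.zpowers_le]
        exact g.2
    have hfiz : (Subgroup.zpowers u).FiniteIndex := hCz ▸ hCfi
    have hcharz : ∀ (e : MulAut A) (x : A), x ∈ Subgroup.zpowers u →
        e x ∈ Subgroup.zpowers u := by
      intro e x hx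
      rw [← hCz] at hx ⊢
      exact hchar e x hx
    have hinj : Function.Injective fun k : ℤ => u ^ k := by
      rw [injective_zpow_iff_not_isOfFinOrder]
      intro hord
      have h1 : (Subgroup.zpowers u : Set A).Finite := finite_zpowers.mpr hord
      haveI : Finite ↥C := by
        rw [hCz]; exact h1.to_subtype
      haveI : Finite (A ⧸ C) := by
        haveI := hCfi
        exact Subgroup.finite_quotient_of_finiteIndex (H := C)
      haveI : Finite A := Finite.of_equiv _ (Subgroup.groupEquivQuotientProdSubgroup (s := C)).symm
      exact absurd ‹Finite A› hfin
    exact aux_out_of_u u hinj hfiz hcharz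

/-- Given virtually cyclic groups `A` and `B` and `n : ℕ`, there are only finitely
many monomorphisms `i : A → B` whose image has index at most `n` in `B`, up to
precomposition by inner automorphisms of `A`. -/
theorem finitely_many_monos_up_to_inner
    (A B : Type*) [Group A] [Group B]
    (hA : IsVirtuallyCyclic A) (hB : IsVirtuallyCyclic B) (n : ℕ) :
    ∃ (k : ℕ) (f : Fin k → (A →* B)),
      ∀ i : A →* B, Function.Injective i →
        i.range.FiniteIndex → i.range.index ≤ n →
        ∃ (j : Fin k) (a : A), i.comp (MulAut.conj a).toMonoidHom = f j := by
  classical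
  by_cases hex : ∃ i : A →* B, Function.Injective i ∧ i.range.FiniteIndex ∧ i.range.index ≤ n
  case neg =>
    exact ⟨0, Fin.elim0, fun i hi h1 h2 => absurd ⟨i, hi, h1, h2⟩ hex⟩
  obtain ⟨Fout, hFoutFin, hFout⟩ := aux_out hA
  have hKfin := aux_MH' (aux_fg hB) n
  set pick : Subgroup B → (A →* B) := fun K =>
    if h : ∃ i : A →* B, Function.Injective i ∧ i.range = K then h.choose else 1 with hpick
  set Fset : Set (A →* B) :=
    Set.image2 (fun K (β : MulAut A) => (pick K).comp β.toMonoidHom)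
      {K : Subgroup B | K.index ≤ n ∧ K.index ≠ 0} Fout with hFset
  have hFsetFin : Fset.Finite := Set.Finite.image2 _ hKfin hFoutFin
  haveI : Finite ↥Fset := hFsetFin.to_subtype
  obtain ⟨k, ⟨e⟩⟩ := Finite.exists_equiv_fin ↥Fset
  refine ⟨k, fun j => ((e.symm j : ↥Fset) : A →* B), ?_⟩
  intro i hi hfi hle
  set K := i.range with hK
  have hKmem : K ∈ {K : Subgroup B | K.index ≤ n ∧ K.index ≠ 0} := ⟨hle, hfi.index_ne_zero⟩
  have hexK : ∃ i₀ : A →* B, Function.Injective i₀ ∧ i₀.range = K := ⟨i, hi, rfl⟩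
  have hpickK : Function.Injective (pick K) ∧ (pick K).range = K := by
    rw [hpick]; simp only [dif_pos hexK]; exact hexK.choose_spec
  set i₀ := pick K with hi₀
  obtain ⟨hi₀inj, hi₀range⟩ := hpickK
  -- build the automorphism α with i₀ ∘ α = i
  set e1 : A ≃* ↥(i.range) :=
    MulEquiv.ofBijective i.rangeRestrict
      ⟨MonoidHom.rangeRestrict_injective_iff.mpr hi, i.rangeRestrict_surjective⟩ with he1
  set e0 : A ≃* ↥(i₀.range) :=
    MulEquiv.ofBijective i₀.rangeRestrict
      ⟨MonoidHom.rangeRestrict_injective_iff.mpr hi₀inj, i₀.rangeRestrict_surjective⟩ with he0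
  have hcc : i.range = i₀.range := by rw [hi₀range]
  set α : A ≃* A := e1.trans ((MulEquiv.subgroupCongr hcc).trans e0.symm) with hα
  have hkey : ∀ x, i₀ (α x) = i x := by
    intro x
    have h1 : ∀ z : A, (e0 z : B) = i₀ z := fun z => rfl
    have h2 : ∀ y : ↥(i₀.range), i₀ (e0.symm y) = (y : B) := by
      intro y
      rw [← h1 (e0.symm y), MulEquiv.apply_symm_apply]
    have h3 : α x = e0.symm ((MulEquiv.subgroupCongr hcc) (e1 x)) := rfl
    rw [h3, h2, MulEquiv.subgroupCongr_apply]
    rfl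
  obtain ⟨β, hβmem, a, hβ⟩ := hFout α
  have hval : i.comp (MulAut.conj a).toMonoidHom = i₀.comp (β : MulAut A).toMonoidHom := by
    ext x
    have h4 : β x = α ((MulAut.conj a) x) := by rw [← hβ]; rfl
    simp only [MonoidHom.comp_apply, MulEquiv.coe_toMonoidHom]
    rw [h4, hkey]
  have hvmem : i₀.comp (β : MulAut A).toMonoidHom ∈ Fset := by
    rw [hFset]
    exact Set.mem_image2_of_mem hKmem hβmem
  refine ⟨e ⟨_, hvmem⟩, a, ?_⟩
  rw [hval]
  exact congrArg Subtype.val (e.symm_apply_apply ⟨_, hvmem⟩).symm
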